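/- In the Beta–Gamma Poisson–hurdle model with a = 0.5, b = 1, α = 1, β = 1, the general credibility order fails: E[(Y₂ − 3)^+ | Y₁ = 0] = 1/20 > 1/30 = E[(Y₂ − 3)^+ | Y₁ = 1]. -/

import Mathlib

open Real MeasureTheory

/-- Density of the `Beta(a,b)` distribution on `(0,1)`. -/
noncomputable def betaDens (a b x : ℝ) : ℝ :=
  x ^ (a - 1) * (1 - x) ^ (b - 1) * Real.Gamma (a + b) /
    (Real.Gamma a * Real.Gamma b)

/-- Density of the `Gamma(α,β)` distribution on `(0,∞)`. -/
noncomputable def gammaDens (α β x : ℝ) : ℝ :=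
  β ^ α * x ^ (α - 1) * Real.exp (-(β * x)) / Real.Gamma α

/-- Conditional pmf of `Y = Z(1+N)` given `(Θ₁,Θ₂) = (p, lam)`, where
`Z ~ Ber(p)` and `N ~ Pois(lam)` independently. -/
noncomputable def hurdlePMF (p lam : ℝ) : ℕ → ℝ
  | 0 => 1 - p
  | n + 1 => p * Real.exp (-lam) * lam ^ n / (Nat.factorial n)

/-- Conditional expectation `E[h(Y₂) ∣ Y₁ = y₁]` in the Beta–Gamma
Poisson–hurdle mixture model with `Θ₁ ~ Beta(a,b)`, `Θ₂ ~ Gamma(α,β)`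
independent and `(Z_t, N_t)` conditionally iid given `Θ`. -/
noncomputable def condExpHurdle (a b α β : ℝ) (h : ℕ → ℝ) (y₁ : ℕ) : ℝ :=
  (∫ θ₁ in Set.Ioo (0:ℝ) 1, ∫ θ₂ in Set.Ioi (0:ℝ),
      (∑' y₂ : ℕ, h y₂ * hurdlePMF θ₁ θ₂ y₂) * hurdlePMF θ₁ θ₂ y₁ *
        betaDens a b θ₁ * gammaDens α β θ₂) /
  (∫ θ₁ in Set.Ioo (0:ℝ) 1, ∫ θ₂ in Set.Ioi (0:ℝ),
      hurdlePMF θ₁ θ₂ y₁ * betaDens a b θ₁ * gammaDens α β θ₂)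

/-! ### Series lemmas -/

lemma exp_tsum (x : ℝ) : ∑' n : ℕ, x ^ n / ((Nat.factorial n) : ℝ) = Real.exp x := by
  rw [Real.exp_eq_exp_ℝ, NormedSpace.exp_eq_tsum_div]

lemma sumE (x : ℝ) : Summable (fun n : ℕ => x ^ n / ((Nat.factorial n) : ℝ)) :=
  Real.summable_pow_div_factorial x

lemma sumE1 (x : ℝ) : Summable (fun n : ℕ => x ^ (n+1) / ((Nat.factorial (n+1)) : ℝ)) :=
  (summable_nat_add_iff 1).mpr (sumE x)

lemma sumE2 (x : ℝ) : Summable (fun n : ℕ => x ^ (n+2) / ((Nat.factorial (n+2)) : ℝ)) :=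
  (summable_nat_add_iff 2).mpr (sumE x)

lemma tsum1 (x : ℝ) : ∑' n : ℕ, x ^ (n+1) / ((Nat.factorial (n+1)) : ℝ) = Real.exp x - 1 := by
  have h := Summable.tsum_eq_zero_add (sumE x)
  rw [exp_tsum] at h
  simp only [pow_zero, Nat.factorial_zero, Nat.cast_one, div_one] at h
  linarith

lemma tsum2 (x : ℝ) :
    ∑' n : ℕ, x ^ (n+2) / ((Nat.factorial (n+2)) : ℝ) = Real.exp x - 1 - x := by
  have h := Summable.tsum_eq_zero_add (sumE1 x)
  rw [tsum1] at h
  simp only [zero_add, pow_one, Nat.factorial_one, Nat.cast_one, div_one] at h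
  have e : (fun n : ℕ => x ^ (n+2) / ((Nat.factorial (n+2)) : ℝ))
      = fun n : ℕ => x ^ (n+1+1) / ((Nat.factorial (n+1+1)) : ℝ) := rfl
  rw [e]
  linarith

lemma tsumB (x : ℝ) :
    ∑' n : ℕ, x ^ (n+2) / ((Nat.factorial (n+1)) : ℝ) = x * (Real.exp x - 1) := by
  have h : ∀ n : ℕ, x ^ (n+2) / ((Nat.factorial (n+1)) : ℝ)
      = x * (x ^ (n+1) / ((Nat.factorial (n+1)) : ℝ)) := by
    intro n; rw [pow_succ]; ring
  rw [tsum_congr h, tsum_mul_left, tsum1]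

lemma idg (x : ℝ) (n : ℕ) : max (((n+2:ℕ):ℝ) - 2) 0 * (x ^ (n+2) / ((Nat.factorial (n+2)):ℝ))
    = x ^ (n+2) / ((Nat.factorial (n+1)):ℝ) - 2 * (x ^ (n+2) / ((Nat.factorial (n+2)):ℝ)) := by
  have hmax : max (((n+2:ℕ):ℝ) - 2) 0 = (n:ℝ) := by
    push_cast; rw [add_sub_cancel_right]; exact max_eq_left n.cast_nonneg
  rw [hmax, Nat.factorial_succ (n+1)]
  have h1 : ((Nat.factorial (n+1) : ℝ)) ≠ 0 := Nat.cast_ne_zero.mpr (Nat.factorial_ne_zero _)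
  push_cast
  field_simp
  ring

lemma hs2 (x : ℝ) : Summable (fun n : ℕ => x ^ (n+2) / ((Nat.factorial (n+1)):ℝ)) := by
  refine ((sumE1 x).mul_left x).congr fun n => ?_
  rw [pow_succ]; ring

lemma sumG (x : ℝ) :
    Summable (fun n : ℕ => max ((n:ℝ) - 2) 0 * (x ^ n / ((Nat.factorial n):ℝ))) := by
  apply (summable_nat_add_iff 2).mp
  exact ((hs2 x).sub ((sumE2 x).mul_left 2)).congr fun n => (idg x n).symm

lemma tsumG (x : ℝ) :
    ∑' n : ℕ, max ((n:ℝ) - 2) 0 * (x ^ n / ((Nat.factorial n):ℝ))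
      = (x - 2) * Real.exp x + 2 + x := by
  set g : ℕ → ℝ := fun n => max ((n:ℝ) - 2) 0 * (x ^ n / ((Nat.factorial n):ℝ)) with hgdef
  have hg : Summable g := sumG x
  have hg1 : Summable (fun n : ℕ => g (n+1)) := (summable_nat_add_iff 1).mpr hg
  rw [Summable.tsum_eq_zero_add hg, Summable.tsum_eq_zero_add hg1]
  have e : (fun n : ℕ => g (n+1+1)) = fun n : ℕ => g (n+2) := rfl
  rw [e, tsum_congr (idg x), Summable.tsum_sub (hs2 x) ((sumE2 x).mul_left 2), tsumB,
    tsum_mul_left, tsum2]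
  have g0 : g 0 = 0 := by norm_num [hgdef]
  have g1 : g 1 = 0 := by norm_num [hgdef]
  rw [g0, g1]
  ring

lemma tsum_h (p lam : ℝ) :
    ∑' y : ℕ, max ((y:ℝ) - 3) 0 * hurdlePMF p lam y
      = p * (lam - 2) + p * (2 + lam) * Real.exp (-lam) := by
  have idf : ∀ n : ℕ, max (((n+1:ℕ):ℝ) - 3) 0 * hurdlePMF p lam (n+1)
      = (p * Real.exp (-lam)) * (max ((n:ℝ)-2) 0 * (lam ^ n / ((Nat.factorial n):ℝ))) := by
    intro n
    have h3 : (((n+1:ℕ)):ℝ) - 3 = (n:ℝ) - 2 := by push_cast; ring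
    simp only [hurdlePMF]
    rw [h3]; ring
  have hsum : Summable (fun y : ℕ => max ((y:ℝ) - 3) 0 * hurdlePMF p lam y) := by
    apply (summable_nat_add_iff 1).mp
    exact (((sumG lam).mul_left (p * Real.exp (-lam)))).congr fun n => (idf n).symm
  rw [Summable.tsum_eq_zero_add hsum]
  have e0 : max (((0:ℕ):ℝ) - 3) 0 * hurdlePMF p lam 0 = 0 := by
    norm_num [hurdlePMF]
  rw [e0, tsum_congr idf, tsum_mul_left, tsumG, Real.exp_neg]
  field_simp
  ring

/-! ### Integral lemmas -/

lemma intOn_exp {c : ℝ} (hc : 0 < c) :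
    IntegrableOn (fun x : ℝ => Real.exp (-(c*x))) (Set.Ioi 0) := by
  have h := exp_neg_integrableOn_Ioi 0 hc
  simpa [neg_mul] using h

lemma intOn_xexp {c : ℝ} (hc : 0 < c) :
    IntegrableOn (fun x : ℝ => x * Real.exp (-(c*x))) (Set.Ioi 0) := by
  have h := integrableOn_rpow_mul_exp_neg_mul_rpow (by norm_num : (-1:ℝ) < 1) (one_pos : (0:ℝ) < 1) hc
  simpa [Real.rpow_one, neg_mul] using h

lemma intExp {c : ℝ} (hc : 0 < c) :
    ∫ x in Set.Ioi (0:ℝ), Real.exp (-(c*x)) = 1/c := by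
  have h := Real.integral_rpow_mul_exp_neg_mul_Ioi (a := 1) one_pos hc
  simpa [Real.rpow_one, Real.Gamma_one, sub_self, Real.rpow_zero] using h

lemma intXExp {c : ℝ} (hc : 0 < c) :
    ∫ x in Set.Ioi (0:ℝ), x * Real.exp (-(c*x)) = 1/c^2 := by
  have h := Real.integral_rpow_mul_exp_neg_mul_Ioi (a := 2) two_pos hc
  have h1 : ((2:ℝ) - 1) = 1 := by norm_num
  rw [h1] at h
  simp only [Real.rpow_one] at h
  rw [h]
  rw [show ((1:ℝ)/c) ^ (2:ℝ) = (1/c)^(2:ℕ) by rw [← Real.rpow_natCast]; norm_num,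
    Real.Gamma_two]
  field_simp

lemma JJ {c d : ℝ} (hc : 0 < c) (hd : 0 < d) :
    ∫ x in Set.Ioi (0:ℝ), ((x-2) * Real.exp (-(c*x)) + (2+x) * Real.exp (-(d*x)))
      = (1/c^2 - 2/c) + (2/d + 1/d^2) := by
  have h1 := intOn_exp hc
  have h2 := intOn_xexp hc
  have h3 := intOn_exp hd
  have h4 := intOn_xexp hd
  have e : ∀ x : ℝ, (x-2) * Real.exp (-(c*x)) + (2+x) * Real.exp (-(d*x))
      = (x * Real.exp (-(c*x)) - 2 * Real.exp (-(c*x)))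
        + (2 * Real.exp (-(d*x)) + x * Real.exp (-(d*x))) := by
    intro x; ring
  simp only [e]
  have h1' : IntegrableOn (fun x : ℝ => 2 * Real.exp (-(c*x))) (Set.Ioi 0) := h1.const_mul 2
  have h3' : IntegrableOn (fun x : ℝ => 2 * Real.exp (-(d*x))) (Set.Ioi 0) := h3.const_mul 2
  have hA : IntegrableOn (fun x : ℝ => x * Real.exp (-(c*x)) - 2 * Real.exp (-(c*x)))
      (Set.Ioi 0) := h2.sub h1'
  have hB : IntegrableOn (fun x : ℝ => 2 * Real.exp (-(d*x)) + x * Real.exp (-(d*x)))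
      (Set.Ioi 0) := h3'.add h4
  rw [integral_add hA hB, integral_sub h2 h1', integral_add h3' h4,
    integral_const_mul, integral_const_mul, intExp hc, intXExp hc, intExp hd, intXExp hd]
  ring

lemma intOn_rpow {r : ℝ} (hr : -1 < r) :
    IntegrableOn (fun x : ℝ => x ^ r) (Set.Ioo (0:ℝ) 1) := by
  have h := intervalIntegral.intervalIntegrable_rpow' (a := 0) (b := 1) hr
  rw [intervalIntegrable_iff_integrableOn_Ioc_of_le zero_le_one] at h
  exact h.mono_set Set.Ioo_subset_Ioc_self

lemma intPow {r : ℝ} (hr : -1 < r) :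
    ∫ x in Set.Ioo (0:ℝ) 1, x ^ r = 1/(r+1) := by
  rw [← integral_Ioc_eq_integral_Ioo, ← intervalIntegral.integral_of_le zero_le_one,
    integral_rpow (Or.inl hr), Real.one_rpow, Real.zero_rpow (by linarith)]
  norm_num

/-! ### Density evaluations -/

lemma betaEval (x : ℝ) : betaDens (1/2) 1 x = x ^ ((1:ℝ)/2 - 1) / 2 := by
  unfold betaDens
  rw [show ((1:ℝ) - 1) = 0 by norm_num, Real.rpow_zero,
    show ((1:ℝ)/2 + 1) = (1/2 + 1 : ℝ) by norm_num,
    Real.Gamma_add_one (by norm_num : (1/2:ℝ) ≠ 0), Real.Gamma_one]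
  have hΓ : Real.Gamma (1/2) ≠ 0 := (Real.Gamma_pos_of_pos (by norm_num)).ne'
  field_simp

lemma gammaEval (x : ℝ) : gammaDens 1 1 x = Real.exp (-x) := by
  unfold gammaDens
  rw [show ((1:ℝ) - 1) = 0 by norm_num, Real.rpow_zero, Real.one_rpow, Real.Gamma_one]
  simp

lemma hurdle0 (p x : ℝ) : hurdlePMF p x 0 = 1 - p := rfl

lemma hurdle1 (p x : ℝ) : hurdlePMF p x 1 = p * Real.exp (-x) := by
  have h : hurdlePMF p x 1 = p * Real.exp (-x) * x ^ (0:ℕ) / ((Nat.factorial 0 : ℝ)) := rfl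
  rw [h]
  norm_num

/-! ### The four double integrals -/

lemma inner_num0 (p : ℝ) :
    ∫ x in Set.Ioi (0:ℝ),
      (∑' y₂ : ℕ, max ((y₂:ℝ) - 3) 0 * hurdlePMF p x y₂) * hurdlePMF p x 0 *
        betaDens (1/2) 1 p * gammaDens 1 1 x
      = (p * (1-p) * p ^ ((1:ℝ)/2 - 1) / 2) * (1/4) := by
  have key : ∀ x : ℝ,
      (∑' y₂ : ℕ, max ((y₂:ℝ) - 3) 0 * hurdlePMF p x y₂) * hurdlePMF p x 0 *
        betaDens (1/2) 1 p * gammaDens 1 1 x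
      = (p * (1-p) * p ^ ((1:ℝ)/2 - 1) / 2) *
          ((x-2) * Real.exp (-(1*x)) + (2+x) * Real.exp (-(2*x))) := by
    intro x
    rw [tsum_h, betaEval, gammaEval, hurdle0,
      show -((2:ℝ)*x) = -x + -x by ring, Real.exp_add, show -((1:ℝ)*x) = -x by ring]
    ring
  simp only [key]
  rw [integral_const_mul, JJ one_pos two_pos]
  norm_num

lemma inner_den0 (p : ℝ) :
    ∫ x in Set.Ioi (0:ℝ),
      hurdlePMF p x 0 * betaDens (1/2) 1 p * gammaDens 1 1 x
      = (1-p) * p ^ ((1:ℝ)/2 - 1) / 2 := by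
  have key : ∀ x : ℝ,
      hurdlePMF p x 0 * betaDens (1/2) 1 p * gammaDens 1 1 x
      = ((1-p) * p ^ ((1:ℝ)/2 - 1) / 2) * Real.exp (-(1*x)) := by
    intro x
    rw [betaEval, gammaEval, hurdle0, show -((1:ℝ)*x) = -x by ring]
    ring
  simp only [key]
  rw [integral_const_mul, intExp one_pos]
  norm_num

lemma inner_num1 (p : ℝ) :
    ∫ x in Set.Ioi (0:ℝ),
      (∑' y₂ : ℕ, max ((y₂:ℝ) - 3) 0 * hurdlePMF p x y₂) * hurdlePMF p x 1 *
        betaDens (1/2) 1 p * gammaDens 1 1 x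
      = (p * p * p ^ ((1:ℝ)/2 - 1) / 2) * (1/36) := by
  have key : ∀ x : ℝ,
      (∑' y₂ : ℕ, max ((y₂:ℝ) - 3) 0 * hurdlePMF p x y₂) * hurdlePMF p x 1 *
        betaDens (1/2) 1 p * gammaDens 1 1 x
      = (p * p * p ^ ((1:ℝ)/2 - 1) / 2) *
          ((x-2) * Real.exp (-(2*x)) + (2+x) * Real.exp (-(3*x))) := by
    intro x
    rw [tsum_h, betaEval, gammaEval, hurdle1,
      show -((3:ℝ)*x) = -x + (-x + -x) by ring, show -((2:ℝ)*x) = -x + -x by ring]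
    simp only [Real.exp_add]
    ring
  simp only [key]
  rw [integral_const_mul, JJ two_pos three_pos]
  norm_num

lemma inner_den1 (p : ℝ) :
    ∫ x in Set.Ioi (0:ℝ),
      hurdlePMF p x 1 * betaDens (1/2) 1 p * gammaDens 1 1 x
      = (p * p ^ ((1:ℝ)/2 - 1) / 2) * (1/2) := by
  have key : ∀ x : ℝ,
      hurdlePMF p x 1 * betaDens (1/2) 1 p * gammaDens 1 1 x
      = (p * p ^ ((1:ℝ)/2 - 1) / 2) * Real.exp (-(2*x)) := by
    intro x
    rw [betaEval, gammaEval, hurdle1, show -((2:ℝ)*x) = -x + -x by ring, Real.exp_add]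
    ring
  simp only [key]
  rw [integral_const_mul, intExp two_pos]

lemma rp1 {p : ℝ} (hp : 0 < p) : p ^ ((1:ℝ)/2) = p * p ^ ((1:ℝ)/2 - 1) := by
  calc p ^ ((1:ℝ)/2) = p ^ (1 + ((1:ℝ)/2 - 1)) := by norm_num
    _ = p * p ^ ((1:ℝ)/2 - 1) := by rw [Real.rpow_add hp, Real.rpow_one]

lemma rp3 {p : ℝ} (hp : 0 < p) : p ^ ((3:ℝ)/2) = p * p * p ^ ((1:ℝ)/2 - 1) := by
  calc p ^ ((3:ℝ)/2) = p ^ (1 + (1:ℝ)/2) := by norm_num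
    _ = p * p ^ ((1:ℝ)/2) := by rw [Real.rpow_add hp, Real.rpow_one]
    _ = p * p * p ^ ((1:ℝ)/2 - 1) := by rw [rp1 hp]; ring

lemma num0 :
    (∫ p in Set.Ioo (0:ℝ) 1, ∫ x in Set.Ioi (0:ℝ),
      (∑' y₂ : ℕ, max ((y₂:ℝ) - 3) 0 * hurdlePMF p x y₂) * hurdlePMF p x 0 *
        betaDens (1/2) 1 p * gammaDens 1 1 x) = 1/30 := by
  have h : ∀ p ∈ Set.Ioo (0:ℝ) 1,
      (∫ x in Set.Ioi (0:ℝ),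
        (∑' y₂ : ℕ, max ((y₂:ℝ) - 3) 0 * hurdlePMF p x y₂) * hurdlePMF p x 0 *
          betaDens (1/2) 1 p * gammaDens 1 1 x)
      = (p ^ ((1:ℝ)/2) - p ^ ((3:ℝ)/2)) * (1/8) := by
    intro p hp
    rw [inner_num0 p, rp1 hp.1, rp3 hp.1]
    ring
  rw [setIntegral_congr_fun measurableSet_Ioo h, integral_mul_const,
    integral_sub (intOn_rpow (by norm_num)) (intOn_rpow (by norm_num)),
    intPow (by norm_num), intPow (by norm_num)]
  norm_num

lemma den0 :
    (∫ p in Set.Ioo (0:ℝ) 1, ∫ x in Set.Ioi (0:ℝ),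
      hurdlePMF p x 0 * betaDens (1/2) 1 p * gammaDens 1 1 x) = 2/3 := by
  have h : ∀ p ∈ Set.Ioo (0:ℝ) 1,
      (∫ x in Set.Ioi (0:ℝ),
        hurdlePMF p x 0 * betaDens (1/2) 1 p * gammaDens 1 1 x)
      = (p ^ ((1:ℝ)/2 - 1) - p ^ ((1:ℝ)/2)) * (1/2) := by
    intro p hp
    rw [inner_den0 p, rp1 hp.1]
    ring
  rw [setIntegral_congr_fun measurableSet_Ioo h, integral_mul_const,
    integral_sub (intOn_rpow (by norm_num)) (intOn_rpow (by norm_num)),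
    intPow (by norm_num), intPow (by norm_num)]
  norm_num

lemma num1 :
    (∫ p in Set.Ioo (0:ℝ) 1, ∫ x in Set.Ioi (0:ℝ),
      (∑' y₂ : ℕ, max ((y₂:ℝ) - 3) 0 * hurdlePMF p x y₂) * hurdlePMF p x 1 *
        betaDens (1/2) 1 p * gammaDens 1 1 x) = 1/180 := by
  have h : ∀ p ∈ Set.Ioo (0:ℝ) 1,
      (∫ x in Set.Ioi (0:ℝ),
        (∑' y₂ : ℕ, max ((y₂:ℝ) - 3) 0 * hurdlePMF p x y₂) * hurdlePMF p x 1 *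
          betaDens (1/2) 1 p * gammaDens 1 1 x)
      = p ^ ((3:ℝ)/2) * (1/72) := by
    intro p hp
    rw [inner_num1 p, rp3 hp.1]
    ring
  rw [setIntegral_congr_fun measurableSet_Ioo h, integral_mul_const,
    intPow (by norm_num)]
  norm_num

lemma den1 :
    (∫ p in Set.Ioo (0:ℝ) 1, ∫ x in Set.Ioi (0:ℝ),
      hurdlePMF p x 1 * betaDens (1/2) 1 p * gammaDens 1 1 x) = 1/6 := by
  have h : ∀ p ∈ Set.Ioo (0:ℝ) 1,
      (∫ x in Set.Ioi (0:ℝ),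
        hurdlePMF p x 1 * betaDens (1/2) 1 p * gammaDens 1 1 x)
      = p ^ ((1:ℝ)/2) * (1/4) := by
    intro p hp
    rw [inner_den1 p, rp1 hp.1]
    ring
  rw [setIntegral_congr_fun measurableSet_Ioo h, integral_mul_const,
    intPow (by norm_num)]
  norm_num

/-- In the Beta–Gamma Poisson–hurdle model with `a = 1/2`, `b = 1`, `α = 1`,
`β = 1`, the general credibility order fails:
`E[(Y₂ − 3)⁺ ∣ Y₁ = 0] = 1/20 > 1/30 = E[(Y₂ − 3)⁺ ∣ Y₁ = 1]`. -/
theorem general_credibility_order_violation :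
    condExpHurdle (1/2) 1 1 1 (fun y => max ((y : ℝ) - 3) 0) 0 = 1/20 ∧
    condExpHurdle (1/2) 1 1 1 (fun y => max ((y : ℝ) - 3) 0) 1 = 1/30 ∧
    condExpHurdle (1/2) 1 1 1 (fun y => max ((y : ℝ) - 3) 0) 1 <
      condExpHurdle (1/2) 1 1 1 (fun y => max ((y : ℝ) - 3) 0) 0 := by
  have h0 : condExpHurdle (1/2) 1 1 1 (fun y => max ((y : ℝ) - 3) 0) 0 = 1/20 := by
    simp only [condExpHurdle]
    rw [num0, den0]
    norm_num
  have h1 : condExpHurdle (1/2) 1 1 1 (fun y => max ((y : ℝ) - 3) 0) 1 = 1/30 := by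
    simp only [condExpHurdle]
    rw [num1, den1]
    norm_num
  refine ⟨h0, h1, ?_⟩
  rw [h0, h1]
  norm_num
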